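/- If the hyperspace system (K(X), T_K) is pointwise minimal, then every point of (X,T) is locally almost periodic: for every x ∈ X and every open neighborhood U of x, there is an open neighborhood V of x and a syndetic set F ⊆ ℤ₊ such that T^n V ⊆ U for all n ∈ F. -/

import Mathlib

open TopologicalSpace Metric Set

/-- The induced map `T_K` on the hyperspace of nonempty compact subsets. -/
noncomputable def inducedMap {X : Type*} [MetricSpace X] {T : X → X} (hT : Continuous T)
    (A : NonemptyCompacts X) : NonemptyCompacts X :=
  ⟨⟨T '' A, A.isCompact.image hT⟩, A.nonempty.image T⟩

/-- The (forward) orbit closure of a point. -/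
def orbitClosure {Y : Type*} [TopologicalSpace Y] (T : Y → Y) (x : Y) : Set Y :=
  closure (Set.range fun n : ℕ => T^[n] x)

/-- A point is minimal (almost periodic) if its orbit closure is a minimal set. -/
def MinimalPt {Y : Type*} [TopologicalSpace Y] (T : Y → Y) (x : Y) : Prop :=
  ∀ y ∈ orbitClosure T x, x ∈ orbitClosure T y

/-- A set of nonnegative integers is syndetic if it has bounded gaps. -/
def SyndeticNat (F : Set ℕ) : Prop :=
  ∃ N : ℕ, ∀ m : ℕ, ∃ n ∈ F, m ≤ n ∧ n ≤ m + N

lemma inducedMap_iterate_coe {X : Type*} [MetricSpace X] {T : X → X} (hT : Continuous T)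
    (A : NonemptyCompacts X) (n : ℕ) :
    ((inducedMap hT)^[n] A : Set X) = T^[n] '' A := by
  induction n with
  | zero => simp
  | succ n ih =>
    rw [Function.iterate_succ_apply']
    show T '' ((inducedMap hT)^[n] A : Set X) = _
    rw [ih, Function.iterate_succ', Function.comp_def, ← Set.image_comp]
    rfl

lemma inducedMap_continuous {X : Type*} [MetricSpace X] [CompactSpace X] {T : X → X}
    (hT : Continuous T) : Continuous (inducedMap hT) := by
  rw [Metric.continuous_iff]
  intro B ε hε
  obtain ⟨δ, hδ, hd⟩ := Metric.uniformContinuous_iff.1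
    (CompactSpace.uniformContinuous_of_continuous hT) (ε / 2) (by linarith)
  refine ⟨δ, hδ, fun A hAB => ?_⟩
  have hfin : EMetric.hausdorffEdist (A : Set X) (B : Set X) ≠ ⊤ :=
    Metric.hausdorffEdist_ne_top_of_nonempty_of_bounded A.nonempty B.nonempty
      A.isCompact.isBounded B.isCompact.isBounded
  have hfin' : EMetric.hausdorffEdist (B : Set X) (A : Set X) ≠ ⊤ := by
    rw [show EMetric.hausdorffEdist (B : Set X) (A : Set X) = EMetric.hausdorffEdist (A : Set X) (B : Set X)
      from EMetric.hausdorffEdist_comm]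
    exact hfin
  rw [NonemptyCompacts.dist_eq] at hAB ⊢
  have hle : hausdorffDist (T '' (A : Set X)) (T '' (B : Set X)) ≤ ε / 2 := by
    apply Metric.hausdorffDist_le_of_mem_dist (by linarith)
    · rintro _ ⟨a, ha, rfl⟩
      obtain ⟨b, hb, hab⟩ := Metric.exists_dist_lt_of_hausdorffDist_lt ha hAB hfin
      exact ⟨T b, Set.mem_image_of_mem T hb, (hd hab).le⟩
    · rintro _ ⟨b, hb, rfl⟩
      obtain ⟨a, ha, hba⟩ := Metric.exists_dist_lt_of_hausdorffDist_lt hb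
        (by rwa [Metric.hausdorffDist_comm] at hAB) hfin'
      exact ⟨T a, Set.mem_image_of_mem T ha, (hd hba).le⟩
  calc hausdorffDist ((inducedMap hT A : Set X)) ((inducedMap hT B : Set X)) ≤ ε / 2 := hle
    _ < ε := by linarith

lemma syndetic_return {Y : Type*} [TopologicalSpace Y] [CompactSpace Y] {S : Y → Y}
    (hS : Continuous S) {a : Y} (ha : MinimalPt S a) {W : Set Y} (hW : IsOpen W)
    (haW : a ∈ W) : SyndeticNat {n | S^[n] a ∈ W} := by
  set K := orbitClosure S a with hK
  have hKc : IsCompact K := isClosed_closure.isCompact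
  have hcover : K ⊆ ⋃ n : ℕ, S^[n] ⁻¹' W := by
    intro y hy
    have haoy : a ∈ orbitClosure S y := ha y hy
    obtain ⟨z, hzW, n, rfl⟩ :=
      (mem_closure_iff.1 haoy) W hW haW
    exact Set.mem_iUnion.2 ⟨n, hzW⟩
  obtain ⟨s, hs⟩ := hKc.elim_finite_subcover (fun n : ℕ => S^[n] ⁻¹' W)
    (fun n => hW.preimage (hS.iterate n)) hcover
  refine ⟨s.sup id, fun m => ?_⟩
  have hmK : S^[m] a ∈ K := subset_closure ⟨m, rfl⟩
  obtain ⟨n, hns, hn⟩ := Set.mem_iUnion₂.1 (hs hmK)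
  refine ⟨n + m, ?_, Nat.le_add_left m n, ?_⟩
  · show S^[n + m] a ∈ W
    rwa [Function.iterate_add_apply]
  · have : n ≤ s.sup id := Finset.le_sup (f := id) hns
    omega

theorem locallyAlmostPeriodic_of_pointwise_minimal_induced {X : Type*} [MetricSpace X]
    [CompactSpace X] (T : X → X) (hT : Continuous T) (hsurj : Function.Surjective T)
    (h : ∀ A : NonemptyCompacts X, MinimalPt (inducedMap hT) A) :
    ∀ x : X, ∀ U : Set X, IsOpen U → x ∈ U →
      ∃ V : Set X, IsOpen V ∧ x ∈ V ∧
        ∃ F : Set ℕ, SyndeticNat F ∧ ∀ n ∈ F, T^[n] '' V ⊆ U := by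
  intro x U hU hxU
  obtain ⟨r, hr, hball⟩ := Metric.nhds_basis_closedBall.mem_iff.1 (hU.mem_nhds hxU)
  set V : Set X := Metric.ball x r with hV
  have hclV : closure V ⊆ U := (closure_ball_subset_closedBall).trans hball
  set A : NonemptyCompacts X := ⟨⟨closure V, isClosed_closure.isCompact⟩,
    ⟨x, subset_closure (Metric.mem_ball_self hr)⟩⟩ with hA
  -- the open set W = {B | ↑B ⊆ U} in the hyperspace is a neighborhood of A
  obtain ⟨δ, hδ, hthick⟩ := A.isCompact.exists_thickening_subset_open hU hclV
  set W : Set (NonemptyCompacts X) := {B | (B : Set X) ⊆ U} with hW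
  have hWA : Metric.ball A δ ⊆ W := by
    intro B hB y hy
    apply hthick
    rw [Metric.mem_ball, NonemptyCompacts.dist_eq] at hB
    have hfin : EMetric.hausdorffEdist (B : Set X) (A : Set X) ≠ ⊤ :=
      Metric.hausdorffEdist_ne_top_of_nonempty_of_bounded B.nonempty A.nonempty
        B.isCompact.isBounded A.isCompact.isBounded
    have : Metric.infDist y (A : Set X) ≤ Metric.hausdorffDist (B : Set X) (A : Set X) :=
      Metric.infDist_le_hausdorffDist_of_mem hy hfin
    exact Metric.mem_thickening_iff_infDist_lt ⟨x, subset_closure (Metric.mem_ball_self hr)⟩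
      |>.2 (lt_of_le_of_lt this hB)
  have hsyn := syndetic_return (inducedMap_continuous hT) (h A)
    Metric.isOpen_ball (Metric.mem_ball_self hδ)
  refine ⟨V, Metric.isOpen_ball, Metric.mem_ball_self hr,
    {n | (inducedMap hT)^[n] A ∈ Metric.ball A δ}, hsyn, fun n hn => ?_⟩
  have hsub : T^[n] '' (A : Set X) ⊆ U := by
    rw [← inducedMap_iterate_coe hT A n]
    exact hWA hn
  exact (Set.image_mono subset_closure).trans hsub
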